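/- Let C be a linear subspace of GF(2)^n with 0 < dim C < n, with minimum Hamming distance at least d ≥ 1 and dual distance at least d^⊥ ≥ 1. Then 2^n ≥ ℓ(n,d) · ℓ(n,d^⊥), where ℓ(n,d) = Σ_{i=0}^{(d−1)/2} C(n,i) if d is odd, and ℓ(n,d) = Σ_{i=0}^{d/2−1} C(n,i) + C(n−1, d/2−1) if d is even. -/

import Mathlib

/-- The dual code of a binary linear code `C ⊆ GF(2)^n`. -/
def dualCode {n : ℕ} (C : Submodule (ZMod 2) (Fin n → ZMod 2)) :
    Submodule (ZMod 2) (Fin n → ZMod 2) where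
  carrier := {u | ∀ v ∈ C, dotProduct u v = 0}
  zero_mem' := by intro v _; simp
  add_mem' := by
    intro a b ha hb v hv
    rw [Set.mem_setOf_eq] at *
    rw [add_dotProduct, ha v hv, hb v hv, add_zero]
  smul_mem' := by
    intro c u hu v hv
    rw [Set.mem_setOf_eq] at *
    rw [smul_dotProduct, hu v hv, smul_zero]

/-- The minimum Hamming distance of the code `C` is at least `d`. -/
def MinDistGE {n : ℕ} (C : Submodule (ZMod 2) (Fin n → ZMod 2)) (d : ℕ) : Prop :=
  ∀ c ∈ C, c ≠ 0 → d ≤ hammingNorm c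

/-- The function `ℓ(n,d)` from the improved Hamming bound. -/
def ell (n d : ℕ) : ℕ :=
  if Odd d then ∑ i ∈ Finset.range ((d - 1) / 2 + 1), n.choose i
  else (∑ i ∈ Finset.range (d / 2 - 1 + 1), n.choose i) + (n - 1).choose (d / 2 - 1)

/-! ### Auxiliary lemmas -/

lemma zmod2_ne {a b : ZMod 2} (h : a ≠ b) : a = b + 1 := by revert h; revert a b; decide

lemma zmod2_add_one_ne (a : ZMod 2) : a + 1 ≠ a := by revert a; decide

lemma zmod2_eq_of_ne_ne {a b c : ZMod 2} (h1 : b ≠ a) (h2 : c ≠ a) : b = c := by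
  revert h1 h2; revert a b c; decide

lemma card_dist_eq (n : ℕ) (c : Fin n → ZMod 2) (i : ℕ) :
    (Finset.univ.filter fun x : Fin n → ZMod 2 => hammingDist x c = i).card = n.choose i := by
  have h : ((Finset.univ : Finset (Fin n)).powersetCard i).card = n.choose i := by
    rw [Finset.card_powersetCard]; simp
  rw [← h]
  apply Finset.card_bij (fun x _ => Finset.univ.filter fun j => x j ≠ c j)
  · intro x hx
    rw [Finset.mem_filter] at hx
    rw [Finset.mem_powersetCard]
    exact ⟨Finset.subset_univ _, hx.2⟩
  · intro x hx y hy h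
    funext j
    have hj : (j ∈ Finset.univ.filter fun j => x j ≠ c j) ↔
        (j ∈ Finset.univ.filter fun j => y j ≠ c j) := by rw [h]
    simp only [Finset.mem_filter, Finset.mem_univ, true_and] at hj
    by_cases hx : x j = c j
    · by_cases hy : y j = c j
      · rw [hx, hy]
      · exact absurd (hj.2 hy) (by simp [hx])
    · rw [zmod2_ne hx, zmod2_ne (hj.1 hx)]
  · intro s hs
    rw [Finset.mem_powersetCard] at hs
    refine ⟨fun j => if j ∈ s then c j + 1 else c j, ?_, ?_⟩
    · rw [Finset.mem_filter]
      refine ⟨Finset.mem_univ _, ?_⟩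
      rw [← hs.2, hammingDist]
      congr 1
      ext j
      by_cases h : j ∈ s <;> simp [h]
    · ext j
      by_cases h : j ∈ s <;> simp [h]

lemma card_dist_eq_mem (n : ℕ) (j0 : Fin n) (c : Fin n → ZMod 2) (m : ℕ) (hm : 1 ≤ m) :
    (Finset.univ.filter fun x : Fin n → ZMod 2 =>
      hammingDist x c = m ∧ x j0 ≠ c j0).card = (n - 1).choose (m - 1) := by
  have hcard : ((Finset.univ : Finset (Fin n)).erase j0).card = n - 1 := by
    rw [Finset.card_erase_of_mem (Finset.mem_univ _)]; simp
  have h : (((Finset.univ : Finset (Fin n)).erase j0).powersetCard (m - 1)).card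
      = (n - 1).choose (m - 1) := by
    rw [Finset.card_powersetCard, hcard]
  rw [← h]
  apply Finset.card_bij (fun x _ => (Finset.univ.filter fun j => x j ≠ c j).erase j0)
  · intro x hx
    rw [Finset.mem_filter] at hx
    rw [Finset.mem_powersetCard]
    constructor
    · intro j hj
      rw [Finset.mem_erase] at hj ⊢
      exact ⟨hj.1, Finset.mem_univ _⟩
    · have hD : (Finset.univ.filter fun j => x j ≠ c j).card = m := hx.2.1
      rw [Finset.card_erase_of_mem (by simp [hx.2.2]), hD]
  · intro x hx y hy h
    rw [Finset.mem_filter] at hx hy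
    funext j
    by_cases hj0 : j = j0
    · subst hj0
      rw [zmod2_ne hx.2.2, zmod2_ne hy.2.2]
    · have hj : (j ∈ (Finset.univ.filter fun j => x j ≠ c j).erase j0)
          ↔ (j ∈ (Finset.univ.filter fun j => y j ≠ c j).erase j0) := by rw [h]
      simp only [Finset.mem_erase, Finset.mem_filter, Finset.mem_univ, true_and, ne_eq,
        hj0, not_false_iff] at hj
      by_cases hx' : x j = c j
      · by_cases hy' : y j = c j
        · rw [hx', hy']
        · exact absurd (hj.2 hy') (by simp [hx'])
      · rw [zmod2_ne hx', zmod2_ne (hj.1 hx')]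
  · intro s hs
    rw [Finset.mem_powersetCard] at hs
    have hj0s : j0 ∉ s := fun h => by simpa using (hs.1 h)
    have key : (Finset.univ.filter fun j =>
        (if j ∈ insert j0 s then c j + 1 else c j) ≠ c j) = insert j0 s := by
      ext j
      simp only [Finset.mem_filter, Finset.mem_univ, true_and]
      by_cases h : j ∈ insert j0 s
      · rw [if_pos h]; exact iff_of_true (zmod2_add_one_ne _) h
      · rw [if_neg h]; exact iff_of_false (by simp) h
    refine ⟨fun j => if j ∈ insert j0 s then c j + 1 else c j, ?_, ?_⟩
    · rw [Finset.mem_filter]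
      refine ⟨Finset.mem_univ _, ?_, by simp⟩
      show (Finset.univ.filter fun j =>
          (if j ∈ insert j0 s then c j + 1 else c j) ≠ c j).card = m
      rw [key, Finset.card_insert_of_notMem hj0s, hs.2]
      omega
    · rw [key, Finset.erase_insert hj0s]

lemma card_ball (n t : ℕ) (c : Fin n → ZMod 2) :
    (Finset.univ.filter fun x : Fin n → ZMod 2 => hammingDist x c ≤ t).card
      = ∑ i ∈ Finset.range (t + 1), n.choose i := by
  have h : (Finset.univ.filter fun x : Fin n → ZMod 2 => hammingDist x c ≤ t)
      = (Finset.range (t + 1)).biUnion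
          (fun i => Finset.univ.filter fun x => hammingDist x c = i) := by
    ext x
    simp [Nat.lt_succ_iff]
  rw [h, Finset.card_biUnion]
  · exact Finset.sum_congr rfl fun i _ => card_dist_eq n c i
  · intro i _ j _ hij
    rw [Function.onFun_apply, Finset.disjoint_left]
    intro x hx hx'
    rw [Finset.mem_filter] at hx hx'
    exact hij (hx.2 ▸ hx'.2.symm ▸ rfl)

lemma packing_odd (n t : ℕ) (S : Finset (Fin n → ZMod 2))
    (hS : ∀ c ∈ S, ∀ c' ∈ S, c ≠ c' → 2 * t + 1 ≤ hammingDist c c') :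
    S.card * (∑ i ∈ Finset.range (t + 1), n.choose i) ≤ 2 ^ n := by
  classical
  set B : (Fin n → ZMod 2) → Finset (Fin n → ZMod 2) :=
    fun c => Finset.univ.filter fun x => hammingDist x c ≤ t with hB
  have hdisj : ∀ c ∈ S, ∀ c' ∈ S, c ≠ c' → Disjoint (B c) (B c') := by
    intro c hc c' hc' hne
    rw [Finset.disjoint_left]
    intro x hx hx'
    simp only [hB, Finset.mem_filter] at hx hx'
    have ht := hammingDist_triangle c x c'
    rw [hammingDist_comm c x] at ht
    have := hS c hc c' hc' hne
    omega
  calc S.card * (∑ i ∈ Finset.range (t + 1), n.choose i)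
      = ∑ c ∈ S, (B c).card := by
        rw [Finset.sum_congr rfl fun c _ => card_ball n t c, Finset.sum_const, smul_eq_mul]
    _ = (S.biUnion B).card := (Finset.card_biUnion hdisj).symm
    _ ≤ Fintype.card (Fin n → ZMod 2) := Finset.card_le_univ _
    _ = 2 ^ n := by simp

lemma packing_even (n t : ℕ) (j0 : Fin n) (S : Finset (Fin n → ZMod 2))
    (hS : ∀ c ∈ S, ∀ c' ∈ S, c ≠ c' → 2 * t + 2 ≤ hammingDist c c') :
    S.card * ((∑ i ∈ Finset.range (t + 1), n.choose i) + (n - 1).choose t) ≤ 2 ^ n := by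
  classical
  set B : (Fin n → ZMod 2) → Finset (Fin n → ZMod 2) :=
    fun c => Finset.univ.filter fun x =>
      hammingDist x c ≤ t ∨ (hammingDist x c = t + 1 ∧ x j0 ≠ c j0) with hB
  have hcard : ∀ c, (B c).card
      = (∑ i ∈ Finset.range (t + 1), n.choose i) + (n - 1).choose t := by
    intro c
    simp only [hB]
    rw [Finset.filter_or, Finset.card_union_of_disjoint]
    · rw [card_ball n t c, card_dist_eq_mem n j0 c (t + 1) (by omega)]
      simp
    · rw [Finset.disjoint_left]
      intro x hx hx'
      rw [Finset.mem_filter] at hx hx'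
      omega
  have hdisj : ∀ c ∈ S, ∀ c' ∈ S, c ≠ c' → Disjoint (B c) (B c') := by
    intro c hc c' hc' hne
    rw [Finset.disjoint_left]
    intro x hx hx'
    simp only [hB, Finset.mem_filter, Finset.mem_univ, true_and] at hx hx'
    have ht := hammingDist_triangle c x c'
    rw [hammingDist_comm c x] at ht
    have hd := hS c hc c' hc' hne
    have hx1 : hammingDist x c = t + 1 ∧ x j0 ≠ c j0 := by
      rcases hx with h | h
      · rcases hx' with h' | h' <;> omega
      · exact h
    have hx2 : hammingDist x c' = t + 1 ∧ x j0 ≠ c' j0 := by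
      rcases hx' with h' | h'
      · omega
      · exact h'
    have hj0 : c j0 = c' j0 := zmod2_eq_of_ne_ne (Ne.symm hx1.2) (Ne.symm hx2.2)
    set A := Finset.univ.filter fun j => x j ≠ c j with hA
    set A' := Finset.univ.filter fun j => x j ≠ c' j with hA'
    set D := Finset.univ.filter fun j => c j ≠ c' j with hD
    have hDsub : D ⊆ (A ∪ A').erase j0 := by
      intro j hj
      rw [hD, Finset.mem_filter] at hj
      rw [Finset.mem_erase, Finset.mem_union, hA, hA']
      constructor
      · rintro rfl; exact hj.2 hj0
      · by_cases h : x j = c j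
        · right; rw [Finset.mem_filter]
          exact ⟨Finset.mem_univ _, fun h' => hj.2 (h ▸ h' ▸ rfl)⟩
        · left; rw [Finset.mem_filter]; exact ⟨Finset.mem_univ _, h⟩
    have hj0A : j0 ∈ A ∪ A' := by
      rw [Finset.mem_union, hA, Finset.mem_filter]
      exact Or.inl ⟨Finset.mem_univ _, hx1.2⟩
    have hDcard : hammingDist c c' = D.card := rfl
    have hAcard : A.card = t + 1 := hx1.1
    have hA'card : A'.card = t + 1 := hx2.1
    have h1 : D.card ≤ (A ∪ A').card - 1 := by
      calc D.card ≤ ((A ∪ A').erase j0).card := Finset.card_le_card hDsub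
        _ = (A ∪ A').card - 1 := Finset.card_erase_of_mem hj0A
    have h2 : (A ∪ A').card ≤ A.card + A'.card := Finset.card_union_le _ _
    have h3 : 1 ≤ (A ∪ A').card := Finset.card_pos.2 ⟨j0, hj0A⟩
    omega
  calc S.card * ((∑ i ∈ Finset.range (t + 1), n.choose i) + (n - 1).choose t)
      = ∑ c ∈ S, (B c).card := by
        rw [Finset.sum_congr rfl fun c _ => hcard c, Finset.sum_const, smul_eq_mul]
    _ = (S.biUnion B).card := (Finset.card_biUnion hdisj).symm
    _ ≤ Fintype.card (Fin n → ZMod 2) := Finset.card_le_univ _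
    _ = 2 ^ n := by simp

/-- The improved Hamming bound for any code with minimum distance at least `d`. -/
lemma hamming_bound {n : ℕ} (d : ℕ) (hd : 1 ≤ d) (hn : 0 < n)
    (C : Submodule (ZMod 2) (Fin n → ZMod 2)) (hC : MinDistGE C d) :
    Nat.card C * ell n d ≤ 2 ^ n := by
  classical
  set S := Finset.univ.filter (fun x : Fin n → ZMod 2 => x ∈ C) with hSdef
  have hcardS : Nat.card C = S.card := by
    rw [Nat.card_eq_fintype_card, Fintype.card_subtype]
  have hdist : ∀ c ∈ S, ∀ c' ∈ S, c ≠ c' → d ≤ hammingDist c c' := by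
    intro c hc c' hc' hne
    rw [hSdef, Finset.mem_filter] at hc hc'
    rw [hammingDist_eq_hammingNorm]
    rw [neg_add_eq_sub]
    exact hC (c' - c) (Submodule.sub_mem C hc'.2 hc.2) (sub_ne_zero.2 (Ne.symm hne))
  rw [ell]
  by_cases hodd : Odd d
  · rw [if_pos hodd]
    obtain ⟨t, ht⟩ := hodd
    have h2 : (d - 1) / 2 = t := by omega
    rw [h2, hcardS]
    exact packing_odd n t S
      (fun c hc c' hc' hne => by have := hdist c hc c' hc' hne; omega)
  · rw [if_neg hodd]
    have heven : ∃ t, d = 2 * t + 2 := by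
      rcases Nat.even_or_odd d with h | h
      · obtain ⟨t, ht⟩ := h; exact ⟨t - 1, by omega⟩
      · exact absurd h hodd
    obtain ⟨t, ht⟩ := heven
    have h2 : d / 2 - 1 = t := by omega
    rw [h2, hcardS]
    exact packing_even n t ⟨0, hn⟩ S
      (fun c hc c' hc' hne => by have := hdist c hc c' hc' hne; omega)

lemma mem_dualCode {n : ℕ} (C : Submodule (ZMod 2) (Fin n → ZMod 2)) (x : Fin n → ZMod 2) :
    x ∈ dualCode C ↔ ∀ v ∈ C, dotProduct x v = 0 := Iff.rfl

/-- dot product with a fixed vector on the right, as a linear map in the left argument -/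
def dotL {n : ℕ} (v : Fin n → ZMod 2) : (Fin n → ZMod 2) →ₗ[ZMod 2] ZMod 2 where
  toFun x := dotProduct x v
  map_add' := by intros; simp [add_dotProduct]
  map_smul' := by intros; simp [smul_dotProduct]

lemma dual_finrank_ge {n : ℕ} (C : Submodule (ZMod 2) (Fin n → ZMod 2)) :
    n - Module.finrank (ZMod 2) C ≤ Module.finrank (ZMod 2) (dualCode C) := by
  classical
  set k := Module.finrank (ZMod 2) C with hk
  let b : Module.Basis (Fin k) (ZMod 2) C := Module.finBasis (ZMod 2) C
  let Φ : (Fin n → ZMod 2) →ₗ[ZMod 2] (Fin k → ZMod 2) :=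
    LinearMap.pi fun i => dotL ((b i : Fin n → ZMod 2))
  have hker : LinearMap.ker Φ ≤ dualCode C := by
    intro x hx
    rw [LinearMap.mem_ker] at hx
    rw [mem_dualCode]
    have hxi : ∀ i, dotProduct x ((b i : Fin n → ZMod 2)) = 0 :=
      fun i => congrFun hx i
    intro v hv
    have hCspan : C = Submodule.span (ZMod 2)
        (Set.range fun i => ((b i : Fin n → ZMod 2))) := by
      conv_lhs => rw [← Submodule.map_subtype_top C, ← b.span_eq]
      rw [Submodule.map_span, ← Set.range_comp]
      rfl
    rw [hCspan] at hv
    induction hv using Submodule.span_induction with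
    | mem v hvmem =>
      obtain ⟨i, rfl⟩ := hvmem
      exact hxi i
    | zero => simp
    | add u w _ _ hu hw => rw [dotProduct_add, hu, hw, add_zero]
    | smul a u _ hu => rw [dotProduct_smul, hu, smul_zero]
  have hrn := LinearMap.finrank_range_add_finrank_ker Φ
  have hV : Module.finrank (ZMod 2) (Fin n → ZMod 2) = n := by
    simp [Module.finrank_fin_fun]
  have hrange : Module.finrank (ZMod 2) (LinearMap.range Φ) ≤ k := by
    have := Submodule.finrank_le (LinearMap.range Φ)
    simpa [Module.finrank_fin_fun] using this
  have hmono := Submodule.finrank_mono hker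
  omega

lemma card_submodule {n : ℕ} (C : Submodule (ZMod 2) (Fin n → ZMod 2)) :
    Nat.card C = 2 ^ Module.finrank (ZMod 2) C := by
  haveI := Fintype.ofFinite C
  rw [Nat.card_eq_fintype_card]
  have := Module.card_eq_pow_finrank (K := ZMod 2) (V := C)
  simpa using this

theorem primal_dual_improved_hamming_bound (n d dp : ℕ)
    (C : Submodule (ZMod 2) (Fin n → ZMod 2))
    (h0 : 0 < Module.finrank (ZMod 2) C) (h1 : Module.finrank (ZMod 2) C < n)
    (hd : 1 ≤ d) (hdp : 1 ≤ dp)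
    (hC : MinDistGE C d) (hC' : MinDistGE (dualCode C) dp) :
    2 ^ n ≥ ell n d * ell n dp := by
  classical
  set k := Module.finrank (ZMod 2) C with hk
  have hn : 0 < n := lt_of_le_of_lt (Nat.zero_le _) h1
  have hb1 := hamming_bound d hd hn C hC
  have hb2 := hamming_bound dp hdp hn (dualCode C) hC'
  have hc1 : Nat.card C = 2 ^ k := card_submodule C
  have hc2 : 2 ^ (n - k) ≤ Nat.card (dualCode C) := by
    rw [card_submodule (dualCode C)]
    exact Nat.pow_le_pow_right (by norm_num) (dual_finrank_ge C)
  have e1 : ell n d * 2 ^ k ≤ 2 ^ n := by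
    calc ell n d * 2 ^ k = Nat.card C * ell n d := by rw [hc1, mul_comm]
      _ ≤ 2 ^ n := hb1
  have e2 : ell n dp * 2 ^ (n - k) ≤ 2 ^ n := by
    calc ell n dp * 2 ^ (n - k) ≤ ell n dp * Nat.card (dualCode C) :=
          Nat.mul_le_mul_left _ hc2
      _ = Nat.card (dualCode C) * ell n dp := mul_comm _ _
      _ ≤ 2 ^ n := hb2
  have hkn : k + (n - k) = n := by omega
  have key : (ell n d * ell n dp) * 2 ^ n ≤ 2 ^ n * 2 ^ n := by
    calc (ell n d * ell n dp) * 2 ^ n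
        = (ell n d * 2 ^ k) * (ell n dp * 2 ^ (n - k)) := by
          rw [mul_mul_mul_comm, ← pow_add, hkn]
      _ ≤ 2 ^ n * 2 ^ n := Nat.mul_le_mul e1 e2
  exact Nat.le_of_mul_le_mul_right key (by positivity)
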